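/- Let f and g be complex polynomials with nonzero leading and constant coefficients, having a unique common root w of multiplicity s in f and multiplicity p in g (and no other common roots). Then for all index tuples (j₁,…,jₛ), (k₁,…,kₛ) ∈ {0,…,m}^s: ∂ˢR/∂b_{jₛ}⋯∂b_{j₁} divided by ∂ˢR/∂b_{kₛ}⋯∂b_{k₁} equals w^{(k₁+⋯+kₛ)-(j₁+⋯+jₛ)}, and the denominator is nonzero. -/

import Mathlib

open MvPolynomial

/-- Partial derivative of `F` with respect to the `j`-th coordinate. -/
noncomputable def pd {ι : Type*} [DecidableEq ι] (j : ι) (F : (ι → ℂ) → ℂ) :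
    (ι → ℂ) → ℂ :=
  fun b => deriv (fun t => F (Function.update b j t)) (b j)

noncomputable def pD {ι : Type*} (j : ι) (P : MvPolynomial ι ℂ) : MvPolynomial ι ℂ :=
  pderiv j P

lemma hasDerivAt_eval_update {ι : Type*} [DecidableEq ι] (j : ι)
    (P : MvPolynomial ι ℂ) (b : ι → ℂ) (t₀ : ℂ) :
    HasDerivAt (fun t => eval (Function.update b j t) P)
      (eval (Function.update b j t₀) (pderiv j P)) t₀ := by
  induction P using MvPolynomial.induction_on with
  | C c => simpa using hasDerivAt_const t₀ c
  | add pp q hp hq => simpa [Pi.add_def] using hp.add hq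
  | mul_X pp i hp =>
    by_cases hij : i = j
    · subst hij
      have := hp.mul (hasDerivAt_id t₀)
      simpa [Pi.mul_def, pderiv_mul, pderiv_X, Function.update_apply, mul_comm, add_comm] using this
    · have := hp.mul_const (b i)
      simpa [pderiv_mul, pderiv_X, Function.update_apply, hij, mul_comm] using this

lemma pd_eval {ι : Type*} [DecidableEq ι] (j : ι) (P : MvPolynomial ι ℂ) :
    pd j (fun x => eval x P) = fun x => eval x (pD j P) := by
  funext b
  have h := (hasDerivAt_eval_update j P b (b j)).deriv
  simpa [pd, pD, Function.update_eq_self] using h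

lemma foldr_pd_eval {ι : Type*} [DecidableEq ι] (l : List ι) (P : MvPolynomial ι ℂ) :
    l.foldr pd (fun x => eval x P) = fun x => eval x (l.foldr pD P) := by
  induction l with
  | nil => rfl
  | cons j l ih => simp [List.foldr, ih, pd_eval]

lemma key {σ : Type*} (L Q : MvPolynomial σ ℂ) (c : σ → ℂ)
    (hL : ∀ j, pderiv j L = C (c j)) (s : ℕ) :
    ∀ l : List σ, l.length ≤ s →
      ∃ H, l.foldr pD (L ^ s * Q) =
        C ((s.descFactorial l.length : ℂ) * (l.map c).prod) * L ^ (s - l.length) * Q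
          + L ^ (s - l.length + 1) * H := by
  intro l
  induction l with
  | nil => intro _; exact ⟨0, by simp⟩
  | cons j l ih =>
    intro hlen
    have ht : l.length < s := by simpa using hlen
    obtain ⟨H, hH⟩ := ih ht.le
    set t := l.length with htdef
    obtain ⟨e, he⟩ : ∃ e, s - t = e + 1 := ⟨s - t - 1, by omega⟩
    have he2 : s - (t + 1) = e := by omega
    refine ⟨C ((s.descFactorial t : ℂ) * (l.map c).prod) * pderiv j Q
        + C ((e + 2 : ℂ) * c j) * H + L * pderiv j H, ?_⟩
    have : (j :: l).foldr pD (L ^ s * Q) = pderiv j (l.foldr pD (L ^ s * Q)) := rfl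
    rw [this, hH, he]
    simp only [List.length_cons, ← htdef, he2]
    have hdF : (s.descFactorial (t+1) : ℂ) = (e+1 : ℂ) * (s.descFactorial t : ℂ) := by
      rw [Nat.descFactorial_succ, he]
      push_cast
      ring
    simp only [map_add, pderiv_mul, pderiv_pow, pderiv_C, hL, List.map_cons, List.prod_cons, hdF]
    simp only [map_add, map_mul, map_natCast, map_ofNat, map_one]
    push_cast
    ring

lemma prodpow {m : ℕ} (w : ℂ) (hw : w ≠ 0) :
    ∀ l : List (Fin (m+1)), (l.map fun r : Fin (m+1) => w ^ (m - (r:ℕ))).prod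
      = w ^ (((l.length : ℤ) * m) - (l.map fun j : Fin (m+1) => ((j : ℕ) : ℤ)).sum) := by
  intro l
  induction l with
  | nil => simp
  | cons j l ih =>
    simp only [List.map_cons, List.prod_cons, List.sum_cons, List.length_cons, ih]
    rw [← zpow_natCast w (m - (j:ℕ)), ← zpow_add₀ hw]
    congr 1
    have : ((m - (j:ℕ) : ℕ) : ℤ) = (m : ℤ) - (j:ℕ) := by
      rw [Nat.cast_sub (Fin.is_le j)]
    rw [this]
    push_cast
    ring

lemma pderiv_linear {m : ℕ} (w : ℂ) (j' : Fin (m+1)) :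
    pderiv j' (∑ j : Fin (m+1), C (w ^ (m - (j:ℕ))) * X j) = C (w ^ (m - (j':ℕ))) := by
  rw [map_sum]
  simp [pderiv_C_mul, pderiv_X, Pi.single_apply]

theorem stmt7 (n m s p : ℕ) (hs : 1 ≤ s) (hp : 1 ≤ p)
    (a₀ b₀ w : ℂ) (ha₀ : a₀ ≠ 0) (hb₀ : b₀ ≠ 0)
    (z : Fin n → ℂ) (y : Fin m → ℂ)
    (hz0 : ∀ i, z i ≠ 0) (hy0 : ∀ j, y j ≠ 0)
    (hsw : (Finset.univ.filter (fun i : Fin n => z i = w)).card = s)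
    (hpw : (Finset.univ.filter (fun j : Fin m => y j = w)).card = p)
    (honly : ∀ i : Fin n, z i ≠ w → ∀ j : Fin m, y j ≠ z i)
    (b : Fin (m+1) → ℂ)
    (hb : ∀ u, ∑ j : Fin (m+1), b j * u ^ (m - (j : ℕ)) = b₀ * ∏ j, (u - y j))
    (Rb : (Fin (m+1) → ℂ) → ℂ)
    (hRb : Rb = fun b' => a₀ ^ m * ∏ i, ∑ j : Fin (m+1), b' j * (z i) ^ (m - (j : ℕ))) :
    ∀ l k : List (Fin (m+1)), l.length = s → k.length = s →
      (k.foldr pd Rb) b ≠ 0 ∧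
      (l.foldr pd Rb) b =
        w ^ ((k.map (fun j => ((j : ℕ) : ℤ))).sum - (l.map (fun j => ((j : ℕ) : ℤ))).sum) *
          (k.foldr pd Rb) b := by
  classical
  -- w is nonzero
  have hAne : (Finset.univ.filter (fun i : Fin n => z i = w)).Nonempty := by
    rw [← Finset.card_pos, hsw]; omega
  obtain ⟨i₀, hi₀⟩ := hAne
  have hw : w ≠ 0 := (Finset.mem_filter.mp hi₀).2 ▸ hz0 i₀
  -- the polynomials
  set L : MvPolynomial (Fin (m+1)) ℂ := ∑ j : Fin (m+1), C (w ^ (m - (j:ℕ))) * X j with hLdef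
  set Li : Fin n → MvPolynomial (Fin (m+1)) ℂ :=
    fun i => ∑ j : Fin (m+1), C (z i ^ (m - (j:ℕ))) * X j with hLidef
  set Q : MvPolynomial (Fin (m+1)) ℂ :=
    C (a₀ ^ m) * ∏ i ∈ Finset.univ.filter (fun i : Fin n => ¬ z i = w), Li i with hQdef
  have hsplit : L ^ s * Q = C (a₀ ^ m) * ∏ i, Li i := by
    rw [hQdef,
      ← Finset.prod_filter_mul_prod_filter_not Finset.univ (fun i => z i = w) Li]
    have h1 : (∏ i ∈ Finset.univ.filter (fun i : Fin n => z i = w), Li i) = L ^ s := by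
      rw [← hsw]
      exact Finset.prod_eq_pow_card fun i hi => by
        simp only [hLidef, (Finset.mem_filter.mp hi).2, hLdef]
    rw [h1]; ring
  have hRpoly : Rb = fun x => eval x (L ^ s * Q) := by
    rw [hRb]
    funext x
    rw [hsplit]
    simp only [hLidef, map_mul, map_prod, map_sum, eval_C, eval_X]
    congr 1
    exact Finset.prod_congr rfl fun i _ => Finset.sum_congr rfl fun j _ => mul_comm _ _
  -- evaluation of L at b is zero
  have evalL0 : eval b L = 0 := by
    have hBne : (Finset.univ.filter (fun j : Fin m => y j = w)).Nonempty := by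
      rw [← Finset.card_pos, hpw]; omega
    obtain ⟨j₀, hj₀⟩ := hBne
    have hyj₀ : y j₀ = w := (Finset.mem_filter.mp hj₀).2
    have h1 : eval b L = ∑ j : Fin (m+1), b j * w ^ (m - (j:ℕ)) := by
      rw [hLdef]
      simp only [map_sum, map_mul, eval_C, eval_X]
      exact Finset.sum_congr rfl fun j _ => mul_comm _ _
    rw [h1, hb w, Finset.prod_eq_zero (Finset.mem_univ j₀) (by rw [hyj₀, sub_self]), mul_zero]
  -- evaluation of Q at b is nonzero
  have evalQne : eval b Q ≠ 0 := by
    rw [hQdef]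
    simp only [hLidef, map_mul, map_prod, map_sum, eval_C, eval_X]
    refine mul_ne_zero (pow_ne_zero _ ha₀) (Finset.prod_ne_zero_iff.mpr fun i hi => ?_)
    have hz : z i ≠ w := by simpa using (Finset.mem_filter.mp hi).2
    have h1 : (∑ j : Fin (m+1), z i ^ (m - (j:ℕ)) * b j) = b₀ * ∏ j, (z i - y j) := by
      rw [← hb (z i)]
      exact Finset.sum_congr rfl fun j _ => mul_comm _ _
    rw [h1]
    exact mul_ne_zero hb₀ (Finset.prod_ne_zero_iff.mpr fun j _ =>
      sub_ne_zero_of_ne (Ne.symm (honly i hz j)))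
  -- the value of the iterated derivative
  have hval : ∀ l : List (Fin (m+1)), l.length = s →
      (l.foldr pd Rb) b = ((s.descFactorial s : ℂ) * eval b Q) *
        w ^ (((s : ℤ) * m) - (l.map fun j : Fin (m+1) => ((j : ℕ) : ℤ)).sum) := by
    intro l hl
    obtain ⟨H, hH⟩ := key L Q (fun j : Fin (m+1) => w ^ (m - (j:ℕ)))
      (fun j => by rw [hLdef]; exact pderiv_linear w j) s l (le_of_eq hl)
    rw [hl, Nat.sub_self] at hH
    rw [hRpoly, foldr_pd_eval]
    simp only [hH]
    have hprod := prodpow w hw l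
    rw [hl] at hprod
    simp only [map_add, map_mul, eval_C, evalL0, zero_add, pow_zero, pow_one, map_one, zero_mul, add_zero,
      mul_one, hprod]
    ring
  -- finish
  intro l k hl hk
  have hKne : ((s.descFactorial s : ℂ) * eval b Q) ≠ 0 := by
    refine mul_ne_zero (Nat.cast_ne_zero.mpr ?_) evalQne
    rw [Nat.descFactorial_self]
    exact Nat.factorial_ne_zero s
  constructor
  · rw [hval k hk]
    exact mul_ne_zero hKne (zpow_ne_zero _ hw)
  · rw [hval l hl, hval k hk, mul_left_comm, ← zpow_add₀ hw]
    congr 2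
    simp only [bind_pure_comp, List.map_eq_map, List.map_map, Function.comp_def]
    ring
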